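/- Let S be a string, Y_S = y₁⋯y_t an m-bounded parsing, and suppose ∑_{i} -log₂ p_{H₁}(yᵢ, yᵢ₋₁) ≤ B where p_{H₁}(y, y') = (1/m)·cnt(y'y)/cnt(y') (with some fixed convention for the first phrase). If, for each fixed preceding phrase y', ∑_{y} p_{H₁}(y,y')·m = ∑_y cnt(y'y)/cnt(y') ≤ m over distinct following substrings y of each length, so that ∑_y p_{H₁}(y,y') ≤ 1, then t·H₁(Y_S) ≤ B, where H₁(Y_S) is the first order entropy of the parsing string. -/

import Mathlib

open Finset

/-- `cnt S w` = number of occurrences of the word `w` as a substring of `S`. -/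
def cnt {α : Type*} [DecidableEq α] (S w : List α) : ℕ :=
  ((Finset.range S.length).filter
    (fun i => (S.drop i).take w.length = w ∧ i + w.length ≤ S.length)).card

/-- First order empirical entropy of a string `T` (over the letters occurring in it):
`H₁(T) = (1/|T|) ∑_{σ,a} cnt_T(σa) log₂(cnt_T(σ·)/cnt_T(σa))`. -/
noncomputable def H1 {α : Type*} [DecidableEq α] (T : List α) : ℝ :=
  (1 / (T.length : ℝ)) * ∑ σ ∈ T.toFinset, ∑ a ∈ T.toFinset,
    (cnt T [σ, a] : ℝ) *
      Real.logb 2 ((∑ b ∈ T.toFinset, (cnt T [σ, b] : ℝ)) / (cnt T [σ, a] : ℝ))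

/-- `p_{H₁}(y, y') = (1/m)·cnt(y'y)/cnt(y')`. -/
noncomputable def pH1 {Γ : Type*} [DecidableEq Γ] (S : List Γ) (m : ℕ)
    (y y' : List Γ) : ℝ :=
  (1 / (m : ℝ)) * (cnt S (y' ++ y) : ℝ) / (cnt S y' : ℝ)

lemma list_sum_getD (l : List ℝ) :
    l.sum = ∑ i ∈ Finset.range l.length, l.getD i 0 := by
  induction l with
  | nil => simp
  | cons a l ih =>
    simp [Finset.sum_range_succ', ih, add_comm]

lemma cnt_pos {α : Type*} [DecidableEq α] {S w : List α} (hw : w ≠ [])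
    (h : w <:+: S) : 0 < cnt S w := by
  obtain ⟨s, t, rfl⟩ := h
  apply Finset.card_pos.mpr
  refine ⟨s.length, ?_⟩
  have hw' : 0 < w.length := List.length_pos_iff.mpr hw
  simp only [Finset.mem_filter, Finset.mem_range, List.length_append]
  refine ⟨by omega, ?_, by omega⟩
  rw [List.append_assoc, List.drop_left, List.take_left]

lemma infix_of_cnt_pos {α : Type*} [DecidableEq α] {S w : List α}
    (h : 0 < cnt S w) : w <:+: S := by
  obtain ⟨i, hi⟩ := Finset.card_pos.mp h
  simp only [Finset.mem_filter, Finset.mem_range] at hi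
  rw [← hi.2.1]
  exact ((List.take_prefix _ _).isInfix).trans ((List.drop_suffix _ _).isInfix)

lemma take_two_eq_iff {α : Type*} (Y : List α) (d : α) (σ a : α) (i : ℕ)
    (h : i + 2 ≤ Y.length) :
    (Y.drop i).take 2 = [σ, a] ↔ Y.getD i d = σ ∧ Y.getD (i+1) d = a := by
  obtain ⟨x, y, r, hxy⟩ : ∃ x y r, Y.drop i = x :: y :: r := by
    cases h1 : Y.drop i with
    | nil => have := congrArg List.length h1; simp at this; omega
    | cons x l =>
      cases h2 : l with
      | nil =>
        have := congrArg List.length h1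
        rw [h2] at this; simp at this; omega
      | cons y r => exact ⟨x, y, r, rfl⟩
  have hi1 : i < Y.length := by omega
  have hi2 : i + 1 < Y.length := by omega
  have hx : Y.getD i d = x := by
    rw [List.getD_eq_getElem _ _ hi1]
    have h0 : 0 < (Y.drop i).length := by simp [hxy]
    have := List.getElem_drop (xs := Y) (i := i) (j := 0) (h := h0)
    simp only [hxy, List.getElem_cons_zero, Nat.add_zero] at this
    exact this.symm
  have hy : Y.getD (i+1) d = y := by
    rw [List.getD_eq_getElem _ _ hi2]
    have h0 : 1 < (Y.drop i).length := by simp [hxy]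
    have := List.getElem_drop (xs := Y) (i := i) (j := 1) (h := h0)
    simp only [hxy, List.getElem_cons_succ, List.getElem_cons_zero] at this
    exact this.symm
  rw [hxy, hx, hy]
  simp [List.take_succ_cons]

lemma cnt_pair {α : Type*} [DecidableEq α] (Y : List α) (d : α) (σ a : α) :
    cnt Y [σ, a] = ((Finset.range (Y.length - 1)).filter
      (fun i => Y.getD i d = σ ∧ Y.getD (i+1) d = a)).card := by
  unfold cnt
  congr 1
  ext i
  simp only [Finset.mem_filter, Finset.mem_range, List.length_cons, List.length_nil,
    List.length_singleton]
  constructor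
  · rintro ⟨hi, hw, hle⟩
    refine ⟨by omega, ((take_two_eq_iff Y d σ a i (by omega)).mp hw)⟩
  · rintro ⟨hi, hσ, ha⟩
    refine ⟨by omega, (take_two_eq_iff Y d σ a i (by omega)).mpr ⟨hσ, ha⟩, by omega⟩

lemma gibbs {α : Type*} (A : Finset α) (c p : α → ℝ)
    (hc : ∀ a ∈ A, 0 ≤ c a) (hp : ∀ a ∈ A, 0 ≤ p a)
    (hcp : ∀ a ∈ A, 0 < c a → 0 < p a) (hps : ∑ a ∈ A, p a ≤ 1) :
    ∑ a ∈ A, c a * Real.logb 2 ((∑ b ∈ A, c b) / c a)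
      ≤ ∑ a ∈ A, c a * (- Real.logb 2 (p a)) := by
  set C := ∑ b ∈ A, c b with hCdef
  have hC0 : 0 ≤ C := Finset.sum_nonneg hc
  have h2 : (0:ℝ) < Real.log 2 := Real.log_pos (by norm_num)
  rw [← sub_nonpos, ← Finset.sum_sub_distrib]
  have key : ∀ a ∈ A, c a * Real.logb 2 (C / c a) - c a * (- Real.logb 2 (p a))
      ≤ (C * p a - c a) / Real.log 2 := by
    intro a ha
    rcases eq_or_lt_of_le (hc a ha) with h | h
    · rw [← h]
      simp only [zero_mul, sub_zero, sub_self, zero_sub, neg_zero, mul_zero]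
      have := hp a ha
      positivity
    · have hpa := hcp a ha h
      have hCpos : 0 < C := lt_of_lt_of_le h (Finset.single_le_sum hc ha)
      have e : c a * Real.logb 2 (C / c a) - c a * (- Real.logb 2 (p a))
          = c a * (Real.log (C * p a / c a) / Real.log 2) := by
        simp only [Real.logb]
        rw [Real.log_div (by positivity) (by positivity),
          Real.log_div (by positivity) (by positivity),
          Real.log_mul (by positivity) (by positivity)]
        ring
      rw [e]
      have hlog : Real.log (C * p a / c a) ≤ C * p a / c a - 1 :=
        Real.log_le_sub_one_of_pos (by positivity)
      calc c a * (Real.log (C * p a / c a) / Real.log 2)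
          ≤ c a * ((C * p a / c a - 1) / Real.log 2) := by gcongr
        _ = (C * p a - c a) / Real.log 2 := by field_simp
  calc ∑ a ∈ A, (c a * Real.logb 2 (C / c a) - c a * (- Real.logb 2 (p a)))
      ≤ ∑ a ∈ A, (C * p a - c a) / Real.log 2 := Finset.sum_le_sum key
    _ = (C * (∑ a ∈ A, p a) - C) / Real.log 2 := by
        rw [← Finset.sum_div, Finset.sum_sub_distrib, ← Finset.mul_sum, hCdef]
    _ ≤ 0 := by
        apply div_nonpos_of_nonpos_of_nonneg _ h2.le
        nlinarith

lemma pH1_nonneg {Γ : Type*} [DecidableEq Γ] (S : List Γ) (m : ℕ) (y y' : List Γ) :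
    0 ≤ pH1 S m y y' := by
  unfold pH1
  positivity

lemma mem_ofFn_image {Γ : Type*} [DecidableEq Γ] [Fintype Γ] (z : ℕ) (a : List Γ)
    (h : a.length = z) : a ∈ (Finset.univ : Finset (Fin z → Γ)).image List.ofFn := by
  subst h
  exact Finset.mem_image.mpr ⟨a.get, Finset.mem_univ _, List.ofFn_get a⟩

/-- If an `m`-bounded parsing `Y` of `S` satisfies
`∑ᵢ -log₂ p_{H₁}(yᵢ, yᵢ₋₁) ≤ B` (the first phrase carrying no cost, by convention),
and for each preceding phrase `y'` the values `p_{H₁}(·, y')` summed over following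
words of each length `1..z..m` total at most `1`, then `|Y|·H₁(Y) ≤ B`,
where `H₁(Y)` is the first order entropy of the parsing viewed as a string over the
phrase alphabet. -/
theorem parsing_first_order_entropy_le_cost {Γ : Type*} [DecidableEq Γ] [Fintype Γ]
    (S : List Γ) (hS : S ≠ []) (m : ℕ) (hm : 1 ≤ m)
    (Y : List (List Γ)) (hjoin : Y.flatten = S)
    (hb : ∀ y ∈ Y, y ≠ [] ∧ y.length ≤ m)
    (hkraft : ∀ y' ∈ Y, ∑ z ∈ Finset.Icc 1 m,
        ∑ f : Fin z → Γ, pH1 S m (List.ofFn f) y' ≤ 1)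
    (B : ℝ)
    (hcost : ((Y.zip Y.tail).map (fun yy => - Real.logb 2 (pH1 S m yy.2 yy.1))).sum ≤ B) :
    (Y.length : ℝ) * H1 Y ≤ B := by
  classical
  have hYne : Y ≠ [] := by rintro rfl; exact hS hjoin.symm
  have hn0 : 0 < Y.length := List.length_pos_iff.mpr hYne
  set A := Y.toFinset with hA
  -- positivity of pH1 for counted pairs
  have hppos : ∀ σ ∈ A, ∀ a ∈ A, 0 < cnt Y [σ, a] → 0 < pH1 S m a σ := by
    intro σ hσ a ha hcnt
    have hσY : σ ∈ Y := List.mem_toFinset.mp hσ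
    have hσne : σ ≠ [] := (hb σ hσY).1
    have hinf : [σ, a] <:+: Y := infix_of_cnt_pos hcnt
    obtain ⟨s, t, hst⟩ := hinf
    have hSA : σ ++ a <:+: S := by
      refine ⟨s.flatten, t.flatten, ?_⟩
      rw [← hjoin, ← hst]
      simp [List.flatten_append, List.append_assoc]
    have h1 : 0 < cnt S (σ ++ a) := cnt_pos (by simp [hσne]) hSA
    have h2 : 0 < cnt S σ :=
      cnt_pos hσne (((List.prefix_append σ a).isInfix).trans hSA)
    have hm' : (0:ℝ) < m := by exact_mod_cast Nat.lt_of_lt_of_le Nat.zero_lt_one hm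
    unfold pH1
    have h1' : (0:ℝ) < (cnt S (σ ++ a) : ℝ) := by exact_mod_cast h1
    have h2' : (0:ℝ) < (cnt S σ : ℝ) := by exact_mod_cast h2
    positivity
  -- Kraft condition restricted to the phrases of Y
  have hkraft' : ∀ σ ∈ A, ∑ a ∈ A, pH1 S m a σ ≤ 1 := by
    intro σ hσ
    have hσY : σ ∈ Y := List.mem_toFinset.mp hσ
    refine le_trans ?_ (hkraft σ hσY)
    rw [← Finset.sum_fiberwise_of_maps_to (g := fun a : List Γ => a.length)
      (t := Finset.Icc 1 m) (fun a ha => ?_) (fun a => pH1 S m a σ)]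
    · refine Finset.sum_le_sum fun z hz => ?_
      have himg : ∑ a ∈ (Finset.univ.image (List.ofFn : (Fin z → Γ) → List Γ)),
          pH1 S m a σ = ∑ f : Fin z → Γ, pH1 S m (List.ofFn f) σ :=
        Finset.sum_image (fun x _ y _ h => List.ofFn_injective h)
      rw [← himg]
      apply Finset.sum_le_sum_of_subset_of_nonneg
      · intro a ha
        rw [Finset.mem_filter] at ha
        exact mem_ofFn_image z a ha.2
      · intro a _ _
        exact pH1_nonneg S m a σ
    · have haY : a ∈ Y := List.mem_toFinset.mp ha
      have h1 : a ≠ [] := (hb a haY).1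
      have h2 : a.length ≤ m := (hb a haY).2
      rw [Finset.mem_Icc]
      exact ⟨List.length_pos_iff.mpr h1, h2⟩
  -- rewrite LHS
  have hH : (Y.length : ℝ) * H1 Y = ∑ σ ∈ A, ∑ a ∈ A, (cnt Y [σ, a] : ℝ) *
      Real.logb 2 ((∑ b ∈ A, (cnt Y [σ, b] : ℝ)) / (cnt Y [σ, a] : ℝ)) := by
    unfold H1
    rw [← mul_assoc, mul_one_div_cancel (by exact_mod_cast hn0.ne'), one_mul]
  -- rewrite the cost sum
  have hC : ((Y.zip Y.tail).map (fun yy => - Real.logb 2 (pH1 S m yy.2 yy.1))).sum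
      = ∑ σ ∈ A, ∑ a ∈ A, (cnt Y [σ, a] : ℝ) * (- Real.logb 2 (pH1 S m a σ)) := by
    have hzlen : (Y.zip Y.tail).length = Y.length - 1 := by
      simp only [List.length_zip, List.length_tail]
      omega
    rw [list_sum_getD, List.length_map, hzlen]
    have step1 : ∀ i ∈ Finset.range (Y.length - 1),
        ((Y.zip Y.tail).map (fun yy => - Real.logb 2 (pH1 S m yy.2 yy.1))).getD i 0
        = - Real.logb 2 (pH1 S m (Y.getD (i+1) []) (Y.getD i [])) := by
      intro i hi
      rw [Finset.mem_range] at hi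
      have h1 : i < ((Y.zip Y.tail).map
          (fun yy => - Real.logb 2 (pH1 S m yy.2 yy.1))).length := by
        rw [List.length_map, hzlen]; omega
      have h1' : i < (Y.zip Y.tail).length := by rw [hzlen]; omega
      rw [List.getD_eq_getElem _ _ h1, List.getElem_map, List.getElem_zip,
        List.getElem_tail]
      have hi1 : i < Y.length := by omega
      have hi2 : i + 1 < Y.length := by omega
      rw [List.getD_eq_getElem _ _ hi1, List.getD_eq_getElem _ _ hi2]
    rw [Finset.sum_congr rfl step1]
    have hmaps : ∀ i ∈ Finset.range (Y.length - 1),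
        (Y.getD i [], Y.getD (i+1) []) ∈ A ×ˢ A := by
      intro i hi
      rw [Finset.mem_range] at hi
      have hi1 : i < Y.length := by omega
      have hi2 : i + 1 < Y.length := by omega
      rw [Finset.mem_product, List.getD_eq_getElem _ _ hi1, List.getD_eq_getElem _ _ hi2]
      exact ⟨List.mem_toFinset.mpr (List.getElem_mem hi1),
        List.mem_toFinset.mpr (List.getElem_mem hi2)⟩
    rw [← Finset.sum_fiberwise_of_maps_to hmaps
      (fun i => - Real.logb 2 (pH1 S m (Y.getD (i+1) []) (Y.getD i [])))]
    rw [Finset.sum_product]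
    refine Finset.sum_congr rfl fun σ hσ => Finset.sum_congr rfl fun a ha => ?_
    have : ∀ i ∈ (Finset.range (Y.length - 1)).filter
        (fun i => (Y.getD i [], Y.getD (i+1) []) = (σ, a)),
        - Real.logb 2 (pH1 S m (Y.getD (i+1) []) (Y.getD i []))
        = - Real.logb 2 (pH1 S m a σ) := by
      intro i hi
      rw [Finset.mem_filter, Prod.mk.injEq] at hi
      rw [hi.2.1, hi.2.2]
    rw [Finset.sum_congr rfl this, Finset.sum_const, nsmul_eq_mul]
    congr 2
    rw [cnt_pair Y [] σ a]
    congr 1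
    ext i
    simp [Prod.ext_iff]
  -- combine
  rw [hH]
  refine le_trans ?_ (hC ▸ hcost)
  refine Finset.sum_le_sum fun σ hσ => ?_
  refine gibbs A (fun a => (cnt Y [σ, a] : ℝ)) (fun a => pH1 S m a σ)
    (fun a _ => by positivity) (fun a _ => pH1_nonneg S m a σ)
    (fun a ha hca => hppos σ hσ a ha (by simpa using hca))
    (hkraft' σ hσ)
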